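/- arXiv:2001.00518 — 7 statements merged into one kernel-verified Lean document; each statement's English description precedes it below -/
import Mathlib

section
/- Let (Y, τ) be a topological space, (Z, 𝒰) a uniform space, and 𝔗 a topology on EC(Y,Z). Then 𝔗 is admissible if and only if for every topological space (X, μ) and every map g* : X → EC(Y,Z), continuity of g* implies equi-continuity of the associated map g : X × Y → Z defined by g(x,y) = g*(x)(y). -/
universe u

/-- A function from a topological space to a uniform space is *equi-continuous*
if for each point `w` and each entourage `U` there is an open neighbourhood `V` of
`w` with `h(V) ⊆ U[h(w)]`. -/
def EquiContinuous {W : Type*} {Z : Type*} [TopologicalSpace W] [UniformSpace Z]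
    (h : W → Z) : Prop :=
  ∀ w : W, ∀ U ∈ uniformity Z, ∃ V : Set W, IsOpen V ∧ w ∈ V ∧ ∀ v ∈ V, (h w, h v) ∈ U

/-- `EC Y Z` is the set of all equi-continuous functions from `Y` to `Z`. -/
def EC (Y Z : Type u) [TopologicalSpace Y] [UniformSpace Z] : Set (Y → Z) :=
  {f | EquiContinuous f}

/-- A topology `T` on `EC(Y,Z)` is *admissible* if the evaluation map
`e : EC(Y,Z) × Y → Z`, `e(f,y) = f(y)`, is equi-continuous (with the product
topology of `T` and the topology of `Y`). -/
def Admissible {Y Z : Type u} [TopologicalSpace Y] [UniformSpace Z]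
    (T : TopologicalSpace ↥(EC Y Z)) : Prop :=
  letI := T
  EquiContinuous (fun p : ↥(EC Y Z) × Y => p.1.1 p.2)

/-- A topology `T` on `EC(Y,Z)` is *splitting* if for every topological space `X`,
equi-continuity of a map `g : X × Y → Z` implies continuity of the associated map
`g* : X → EC(Y,Z)`, `g*(x)(y) = g(x,y)`. -/
def Splitting {Y Z : Type u} [TopologicalSpace Y] [UniformSpace Z]
    (T : TopologicalSpace ↥(EC Y Z)) : Prop :=
  ∀ (X : Type u) [TopologicalSpace X] (g' : X → ↥(EC Y Z)),
    EquiContinuous (fun p : X × Y => (g' p.1).1 p.2) →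
    letI := T
    Continuous g'

/-- a topology `T` on `EC(Y,Z)` is admissible iff for every
topological space `X` and every map `g* : X → EC(Y,Z)`, continuity of `g*` implies
equi-continuity of the associated map `g : X × Y → Z`, `g(x,y) = g*(x)(y)`. -/
theorem admissible_iff {Y Z : Type u} [TopologicalSpace Y] [UniformSpace Z]
    (T : TopologicalSpace ↥(EC Y Z)) :
    Admissible T ↔
      ∀ (X : Type u) [TopologicalSpace X] (g' : X → ↥(EC Y Z)),
        (letI := T; Continuous g') →
        EquiContinuous (fun p : X × Y => (g' p.1).1 p.2) := by
  constructor
  · intro hadm X _ g' hg' p U hU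
    obtain ⟨V, hVopen, hVmem, hV⟩ := hadm (g' p.1, p.2) U hU
    refine ⟨(fun q : X × Y => (g' q.1, q.2)) ⁻¹' V, ?_, hVmem, ?_⟩
    · exact hVopen.preimage (by exact (hg'.comp continuous_fst).prodMk continuous_snd)
    · intro v hv
      exact hV _ hv
  · intro h
    exact h (↥(EC Y Z)) id (letI := T; continuous_id)
end

section
/- Let (Y, τ) be a topological space, (Z, 𝒰) a uniform space, and 𝔗 a topology on EC(Y,Z). Then 𝔗 is splitting if and only if for every net {f_n}_{n∈Δ} in EC(Y,Z) and every f ∈ EC(Y,Z), equi-continuous convergence of {f_n}_{n∈Δ} to f implies that {f_n}_{n∈Δ} converges to f in the topology 𝔗. -/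
universe u

/-- A net `F : Δ → EC(Y,Z)` *equi-continuously converges* to `f ∈ EC(Y,Z)` if
for every net `{y_m}_{m ∈ σ}` in `Y` converging to a point `y`, the net
`{F_n(y_m)}` indexed by the product directed set `Δ × σ` converges to `f(y)` in
`Z`, i.e., for each entourage `U`, eventually `(f(y), F_n(y_m)) ∈ U`. -/
def EquiConv {Y Z : Type u} [TopologicalSpace Y] [UniformSpace Z]
    {Δ : Type u} [Preorder Δ] (F : Δ → ↥(EC Y Z)) (f : ↥(EC Y Z)) : Prop :=
  ∀ (σ : Type u) [Nonempty σ] [Preorder σ] [IsDirected σ (· ≤ ·)] (ys : σ → Y) (y : Y),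
    (∀ V : Set Y, IsOpen V → y ∈ V → ∃ m₀, ∀ m, m₀ ≤ m → ys m ∈ V) →
    ∀ U ∈ uniformity Z, ∃ n₀ : Δ, ∃ m₀ : σ, ∀ n, n₀ ≤ n → ∀ m, m₀ ≤ m →
      (f.1 y, (F n).1 (ys m)) ∈ U

/-- A net `F : Δ → EC(Y,Z)` converges to `f` in the topology `T` on `EC(Y,Z)` if
`F` is eventually in every `T`-open set containing `f`. -/
def NetConvIn {Y Z : Type u} [TopologicalSpace Y] [UniformSpace Z]
    (T : TopologicalSpace ↥(EC Y Z)) {Δ : Type u} [Preorder Δ]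
    (F : Δ → ↥(EC Y Z)) (f : ↥(EC Y Z)) : Prop :=
  ∀ H : Set ↥(EC Y Z), (letI := T; IsOpen H) → f ∈ H → ∃ n₀, ∀ n, n₀ ≤ n → F n ∈ H


/-- Auxiliary: the type of open neighbourhoods of a point, ordered by reverse inclusion. -/
def Nbh {X : Type u} [TopologicalSpace X] (x : X) : Type u :=
  {V : Set X // IsOpen V ∧ x ∈ V}

instance {X : Type u} [TopologicalSpace X] (x : X) : Preorder (Nbh x) where
  le V W := W.1 ⊆ V.1
  le_refl V := subset_rfl
  le_trans _ _ _ h1 h2 := fun a ha => h1 (h2 ha)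

instance {X : Type u} [TopologicalSpace X] (x : X) : Nonempty (Nbh x) :=
  ⟨⟨Set.univ, isOpen_univ, trivial⟩⟩

instance {X : Type u} [TopologicalSpace X] (x : X) : IsDirected (Nbh x) (· ≤ ·) :=
  ⟨fun A B => ⟨⟨A.1 ∩ B.1, A.2.1.inter B.2.1, A.2.2, B.2.2⟩,
    fun a ha => ha.1, fun a ha => ha.2⟩⟩

instance prodIsDirected {α β : Type*} [Preorder α] [Preorder β]
    [IsDirected α (· ≤ ·)] [IsDirected β (· ≤ ·)] : IsDirected (α × β) (· ≤ ·) :=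
  ⟨fun a b => by
    obtain ⟨c1, h1, h2⟩ := directed_of (· ≤ ·) a.1 b.1
    obtain ⟨c2, h3, h4⟩ := directed_of (· ≤ ·) a.2 b.2
    exact ⟨(c1, c2), ⟨h1, h3⟩, ⟨h2, h4⟩⟩⟩

/-- Auxiliary: the "tail" topology on `Option Δ`: a set is open iff, whenever it
contains `none`, it contains a tail of `Δ`. -/
def tailTop (Δ : Type u) [Nonempty Δ] [Preorder Δ] [IsDirected Δ (· ≤ ·)] :
    TopologicalSpace (Option Δ) where
  IsOpen S := none ∈ S → ∃ n₀ : Δ, ∀ n, n₀ ≤ n → some n ∈ S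
  isOpen_univ := fun _ => ⟨Classical.arbitrary Δ, fun _ _ => trivial⟩
  isOpen_inter s t hs ht h := by
    obtain ⟨a, ha⟩ := hs h.1
    obtain ⟨b, hb⟩ := ht h.2
    obtain ⟨c, hac, hbc⟩ := directed_of (· ≤ ·) a b
    exact ⟨c, fun n hn => ⟨ha n (hac.trans hn), hb n (hbc.trans hn)⟩⟩
  isOpen_sUnion S hS h := by
    obtain ⟨t, htS, hnt⟩ := h
    obtain ⟨a, ha⟩ := hS t htS hnt
    exact ⟨a, fun n hn => ⟨t, htS, ha n hn⟩⟩

/-- a topology `T` on `EC(Y,Z)` is splitting iff for every net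
`{f_n}` in `EC(Y,Z)` and every `f ∈ EC(Y,Z)`, equi-continuous convergence of
`{f_n}` to `f` implies convergence of `{f_n}` to `f` in `T`. -/
theorem splitting_iff_equiConv_implies_conv {Y Z : Type u} [TopologicalSpace Y]
    [UniformSpace Z] (T : TopologicalSpace ↥(EC Y Z)) :
    Splitting T ↔
      ∀ (Δ : Type u) [Nonempty Δ] [Preorder Δ] [IsDirected Δ (· ≤ ·)]
        (F : Δ → ↥(EC Y Z)) (f : ↥(EC Y Z)),
        EquiConv F f → NetConvIn T F f := by
  constructor
  · intro hs Δ _ _ _ F f hconv H hH hfH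
    letI tt := tailTop Δ
    set g' : Option Δ → ↥(EC Y Z) := fun o => o.elim f F with hg'
    have hg : EquiContinuous (fun p : Option Δ × Y => (g' p.1).1 p.2) := by
      rintro ⟨x, y⟩ U hU
      match x with
      | some n =>
        obtain ⟨V, hVo, hyV, hV⟩ := (F n).2 y U hU
        refine ⟨{some n} ×ˢ V, IsOpen.prod ?_ hVo, ⟨rfl, hyV⟩, ?_⟩
        · intro h; simp at h
        · rintro ⟨x', v⟩ ⟨hx', hv⟩
          simp only [Set.mem_singleton_iff] at hx'
          subst hx'
          exact hV v hv
      | none =>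
        have claim : ∃ n₀ : Δ, ∃ V : Set Y, IsOpen V ∧ y ∈ V ∧
            ∀ n, n₀ ≤ n → ∀ v ∈ V, (f.1 y, (F n).1 v) ∈ U := by
          by_contra hcon
          push_neg at hcon
          have hch : ∀ m : Δ × Nbh y, ∃ n, m.1 ≤ n ∧ ∃ v, v ∈ m.2.1 ∧
              (f.1 y, (F n).1 v) ∉ U := by
            intro m
            obtain ⟨n, hn, v, hv, hU'⟩ := hcon m.1 m.2.1 m.2.2.1 m.2.2.2
            exact ⟨n, hn, v, hv, hU'⟩
          choose nn hle vv hmem hnotU using hch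
          have hys : ∀ V : Set Y, IsOpen V → y ∈ V →
              ∃ m₀ : Δ × Nbh y, ∀ m, m₀ ≤ m → vv m ∈ V := by
            intro V hVo hyV
            exact ⟨(Classical.arbitrary Δ, ⟨V, hVo, hyV⟩),
              fun m hm => hm.2 (hmem m)⟩
          obtain ⟨n₀, m₀, hP⟩ := hconv (Δ × Nbh y) vv y hys U hU
          obtain ⟨n₂, h1, h2⟩ := directed_of (· ≤ ·) n₀ m₀.1
          have hm : m₀ ≤ (n₂, m₀.2) := ⟨h2, le_refl _⟩
          exact hnotU (n₂, m₀.2)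
            (hP _ (h1.trans (hle (n₂, m₀.2))) _ hm)
        obtain ⟨n₀, V, hVo, hyV, hV⟩ := claim
        obtain ⟨Vf, hVfo, hyVf, hVf⟩ := f.2 y U hU
        refine ⟨({none} ∪ {x : Option Δ | ∃ n, n₀ ≤ n ∧ x = some n}) ×ˢ (V ∩ Vf),
          IsOpen.prod ?_ (hVo.inter hVfo), ⟨Or.inl rfl, hyV, hyVf⟩, ?_⟩
        · intro _
          exact ⟨n₀, fun n hn => Or.inr ⟨n, hn, rfl⟩⟩
        · rintro ⟨x', v⟩ ⟨hx', hv, hvf⟩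
          rcases hx' with h | ⟨n, hn, rfl⟩
          · simp only [Set.mem_singleton_iff] at h
            subst h
            exact hVf v hvf
          · exact hV n hn v hv
    have hcont := hs (Option Δ) g' hg
    have hopen : tt.IsOpen (g' ⁻¹' H) := hcont.isOpen_preimage H hH
    obtain ⟨n₀, hn⟩ := hopen (show g' none ∈ H from hfH)
    exact ⟨n₀, fun n hn' => hn n hn'⟩
  · intro hnet X _ g' hg
    letI := T
    rw [continuous_def]
    by_contra hc
    push_neg at hc
    obtain ⟨H, hH, hno⟩ := hc
    rw [isOpen_iff_mem_nhds] at hno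
    push_neg at hno
    obtain ⟨x, hx, hnx⟩ := hno
    rw [mem_nhds_iff] at hnx
    push_neg at hnx
    have hch : ∀ V : Nbh x, ∃ x', x' ∈ V.1 ∧ g' x' ∉ H := by
      intro V
      by_contra h
      push_neg at h
      exact hnx V.1 (fun v hv => h v hv) V.2.1 V.2.2
    choose pt hmem hnot using hch
    have hconv : EquiConv (fun V : Nbh x => g' (pt V)) (g' x) := by
      intro σ _ _ _ ys y hys U hU
      obtain ⟨W, hWo, hWmem, hW⟩ := hg (x, y) U hU
      obtain ⟨u, v, hu, hv, hxu, hyv, huv⟩ := isOpen_prod_iff.mp hWo x y hWmem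
      obtain ⟨m₀, hm₀⟩ := hys v hv hyv
      refine ⟨⟨u, hu, hxu⟩, m₀, fun n hn m hm => ?_⟩
      exact hW (pt n, ys m) (huv ⟨hn (hmem n), hm₀ m hm⟩)
    obtain ⟨n₀, hn₀⟩ := hnet (Nbh x) (fun V => g' (pt V)) (g' x) hconv H hH hx
    exact hnot n₀ (hn₀ n₀ le_rfl)
end

section
/- Let (Y, τ) be a topological space, (Z, 𝒰) a uniform space, and 𝔗 a topology on EC(Y,Z). Then 𝔗 is admissible if and only if for every net {f_n}_{n∈Δ} in EC(Y,Z) and every f ∈ EC(Y,Z), convergence of {f_n}_{n∈Δ} to f in the topology 𝔗 implies equi-continuous convergence of {f_n}_{n∈Δ} to f. -/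
universe u

/-- a topology `T` on `EC(Y,Z)` is admissible iff for every net
`{f_n}` in `EC(Y,Z)` and every `f ∈ EC(Y,Z)`, convergence of `{f_n}` to `f` in
`T` implies equi-continuous convergence of `{f_n}` to `f`. -/
theorem admissible_iff_conv_implies_equiConv {Y Z : Type u} [TopologicalSpace Y]
    [UniformSpace Z] (T : TopologicalSpace ↥(EC Y Z)) :
    Admissible T ↔
      ∀ (Δ : Type u) [Nonempty Δ] [Preorder Δ] [IsDirected Δ (· ≤ ·)]
        (F : Δ → ↥(EC Y Z)) (f : ↥(EC Y Z)),
        NetConvIn T F f → EquiConv F f := by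
  letI := T
  constructor
  · intro hA Δ _ _ _ F f hconv σ _ _ _ ys y hys U hU
    obtain ⟨V, hVopen, hpV, hV⟩ := hA (f, y) U hU
    rw [isOpen_prod_iff] at hVopen
    obtain ⟨u, v, hu, hv, hfu, hyv, huv⟩ := hVopen f y hpV
    obtain ⟨n₀, hn₀⟩ := hconv u hu hfu
    obtain ⟨m₀, hm₀⟩ := hys v hv hyv
    exact ⟨n₀, m₀, fun n hn m hm =>
      hV (F n, ys m) (huv ⟨hn₀ n hn, hm₀ m hm⟩)⟩
  · intro h
    show EquiContinuous (fun p : ↥(EC Y Z) × Y => p.1.1 p.2)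
    intro p U hU
    by_contra hcon
    push_neg at hcon
    obtain ⟨f, y⟩ := p
    let Δ : Type u := ({V : Set (↥(EC Y Z) × Y) // IsOpen V ∧ (f, y) ∈ V})ᵒᵈ
    have hq : ∀ V : Δ, ∃ a : ↥(EC Y Z) × Y,
        a ∈ (OrderDual.ofDual V).1 ∧ (f.1 y, a.1.1 a.2) ∉ U := by
      intro V
      obtain ⟨a, ha1, ha2⟩ := hcon (OrderDual.ofDual V).1 (OrderDual.ofDual V).2.1
        (OrderDual.ofDual V).2.2
      exact ⟨a, ha1, ha2⟩
    choose q hq1 hq2 using hq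
    have hle : ∀ (A B : Δ), A ≤ B ↔ (OrderDual.ofDual B).1 ⊆ (OrderDual.ofDual A).1 :=
      fun A B => Iff.rfl
    haveI : Nonempty Δ := ⟨OrderDual.toDual ⟨Set.univ, isOpen_univ, trivial⟩⟩
    haveI : IsDirected Δ (· ≤ ·) := ⟨fun A B => by
      refine ⟨OrderDual.toDual ⟨(OrderDual.ofDual A).1 ∩ (OrderDual.ofDual B).1,
        (OrderDual.ofDual A).2.1.inter (OrderDual.ofDual B).2.1,
        (OrderDual.ofDual A).2.2, (OrderDual.ofDual B).2.2⟩, ?_, ?_⟩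
      · exact (hle _ _).mpr Set.inter_subset_left
      · exact (hle _ _).mpr Set.inter_subset_right⟩
    have hF : NetConvIn T (fun V : Δ => (q V).1) f := by
      intro H hH hfH
      refine ⟨OrderDual.toDual ⟨H ×ˢ Set.univ, hH.prod isOpen_univ, hfH, trivial⟩,
        fun V hV => ?_⟩
      have hsub := (hle _ V).mp hV
      exact (Set.mem_prod.mp (hsub (hq1 V))).1
    have hys : ∀ W : Set Y, IsOpen W → y ∈ W →
        ∃ m₀ : Δ, ∀ m, m₀ ≤ m → (q m).2 ∈ W := by
      intro W hW hyW
      refine ⟨OrderDual.toDual ⟨Set.univ ×ˢ W, isOpen_univ.prod hW, trivial, hyW⟩,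
        fun V hV => ?_⟩
      have hsub := (hle _ V).mp hV
      exact (Set.mem_prod.mp (hsub (hq1 V))).2
    obtain ⟨n₀, m₀, hnm⟩ := h Δ (fun V => (q V).1) f hF Δ (fun V => (q V).2) y hys U hU
    set V : Δ := OrderDual.toDual ⟨(OrderDual.ofDual n₀).1 ∩ (OrderDual.ofDual m₀).1,
      (OrderDual.ofDual n₀).2.1.inter (OrderDual.ofDual m₀).2.1,
      (OrderDual.ofDual n₀).2.2, (OrderDual.ofDual m₀).2.2⟩ with hVdef
    exact hq2 V (hnm V ((hle _ _).mpr Set.inter_subset_left)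
      V ((hle _ _).mpr Set.inter_subset_right))
end

section
/- Let (Y, τ) be a topological space and (Z, 𝒰) a uniform space. The open-entourage topology on EC(Y,Z), i.e., the topology generated by the subbasis {(V,U)_z : z ∈ Z, V ∈ τ, U ∈ 𝒰} where (V,U)_z = {f ∈ EC(Y,Z) : f(V) ⊆ U[z]}, is admissible. -/
universe u

/-- The *open-entourage topology* on `EC(Y,Z)`: the topology generated by the
subbasis of all sets `(V,U)_z = {f ∈ EC(Y,Z) | f(V) ⊆ U[z]}` with `z ∈ Z`,
`V` open in `Y` and `U` an entourage of `Z`. -/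
def openEntourageTopology (Y Z : Type u) [TopologicalSpace Y] [UniformSpace Z] :
    TopologicalSpace ↥(EC Y Z) :=
  TopologicalSpace.generateFrom
    {S | ∃ (z : Z) (V : Set Y) (U : Set (Z × Z)), IsOpen V ∧ U ∈ uniformity Z ∧
      S = {f : ↥(EC Y Z) | ∀ v ∈ V, (z, f.1 v) ∈ U}}

/-- the open-entourage topology on `EC(Y,Z)` is admissible. -/
theorem openEntourageTopology_admissible {Y Z : Type u} [TopologicalSpace Y]
    [UniformSpace Z] : Admissible (openEntourageTopology Y Z) := by
  intro p U hU
  obtain ⟨f, y⟩ := p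
  obtain ⟨V₀, hVo, hyV, hfV⟩ := f.2 y U hU
  refine ⟨{g : ↥(EC Y Z) | ∀ v ∈ V₀, (f.1 y, g.1 v) ∈ U} ×ˢ V₀, ?_, ⟨hfV, hyV⟩, ?_⟩
  · exact @IsOpen.prod _ _ (openEntourageTopology Y Z) _ _ _
      (TopologicalSpace.GenerateOpen.basic _ ⟨f.1 y, V₀, U, hVo, hU, rfl⟩) hVo
  · rintro ⟨g, v⟩ ⟨hg, hv⟩
    exact hg v hv
end

section
/- Let (Y, τ) be a topological space and (Z, 𝒰) a uniform space. The point-transitive-entourage topology on EC(Y,Z), i.e., the topology generated by the subbasis {(y,U_t)_z : z ∈ Z, y ∈ Y, U_t ∈ 𝒰 with U_t ∘ U_t ⊆ U_t} where (y,U_t)_z = {f ∈ EC(Y,Z) : f(y) ∈ U_t[z]}, is splitting. -/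
universe u

/-- The *point-transitive-entourage topology* on `EC(Y,Z)`: the topology generated
by the subbasis of all sets `(y,U_t)_z = {f ∈ EC(Y,Z) | f(y) ∈ U_t[z]}` with
`z ∈ Z`, `y ∈ Y` and `U_t` a transitive entourage of `Z` (`U_t ∘ U_t ⊆ U_t`). -/
def pointTransitiveEntourageTopology (Y Z : Type u) [TopologicalSpace Y]
    [UniformSpace Z] : TopologicalSpace ↥(EC Y Z) :=
  TopologicalSpace.generateFrom
    {S | ∃ (z : Z) (y : Y) (U : Set (Z × Z)), U ∈ uniformity Z ∧ SetRel.comp U U ⊆ U ∧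
      S = {f : ↥(EC Y Z) | (z, f.1 y) ∈ U}}

/-- the point-transitive-entourage topology on `EC(Y,Z)` is
splitting. -/
theorem pointTransitiveEntourageTopology_splitting {Y Z : Type u} [TopologicalSpace Y]
    [UniformSpace Z] : Splitting (pointTransitiveEntourageTopology Y Z) := by
  intro X _ g' hg
  rw [pointTransitiveEntourageTopology, continuous_generateFrom_iff]
  rintro S ⟨z, y, U, hU, hUt, rfl⟩
  rw [isOpen_iff_forall_mem_open]
  intro x hx
  obtain ⟨V, hVopen, hVmem, hV⟩ := hg (x, y) U hU
  obtain ⟨A, B, hA, hB, hxA, hyB, hAB⟩ := isOpen_prod_iff.1 hVopen x y hVmem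
  refine ⟨A, fun a ha => ?_, hA, hxA⟩
  have h1 : ((g' x).1 y, (g' a).1 y) ∈ U := hV (a, y) (hAB ⟨ha, hyB⟩)
  exact hUt ⟨_, hx, h1⟩
end

section
/- Let (Y, τ) be a topological space, (Z, 𝒰) a uniform space, and fix a selection U(f,y) of open witnesses of equi-continuity. A topology 𝕋 on 𝒪_Z(Y) is splitting if and only if its dual topology 𝔗(𝕋) on EC(Y,Z) (generated by the subbasis {(ℍ,U) : ℍ ∈ 𝕋, U ∈ 𝒰}) is splitting. -/
universe u

section Dual

variable {Y Z : Type u} [TopologicalSpace Y] [UniformSpace Z]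

/-- A *selection of open witnesses of equi-continuity* assigns to each entourage
`U`, each `f ∈ EC(Y,Z)` and each `y ∈ Y` an open set `U(f,y)` containing `y`
with `f(U(f,y)) ⊆ U[f(y)]`. -/
def IsSelection (sel : Set (Z × Z) → ↥(EC Y Z) → Y → Set Y) : Prop :=
  ∀ U ∈ uniformity Z, ∀ (f : ↥(EC Y Z)) (y : Y),
    IsOpen (sel U f y) ∧ y ∈ sel U f y ∧ ∀ v ∈ sel U f y, (f.1 y, f.1 v) ∈ U

/-- `𝒪_Z(Y)`: the collection of all selected open sets `U(f,y)`. -/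
def OZ (sel : Set (Z × Z) → ↥(EC Y Z) → Y → Set Y) : Set (Set Y) :=
  {V | ∃ U ∈ uniformity Z, ∃ (f : ↥(EC Y Z)) (y : Y), V = sel U f y}

/-- For `ℍ ⊆ 𝒪_Z(Y)` and an entourage `U`,
`(ℍ,U) = {f ∈ EC(Y,Z) | U(f,y) ∈ ℍ for every y ∈ Y}`. -/
def ECSet (sel : Set (Z × Z) → ↥(EC Y Z) → Y → Set Y)
    (ℍ : Set ↥(OZ sel)) (U : Set (Z × Z)) : Set ↥(EC Y Z) :=
  {f | ∀ y : Y, sel U f y ∈ Subtype.val '' ℍ}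

/-- For `ℋ ⊆ EC(Y,Z)` and an entourage `U`,
`(ℋ,U) = {U(f,y) | f ∈ ℋ, y ∈ Y}`, as a subset of `𝒪_Z(Y)`. -/
def OZSet (sel : Set (Z × Z) → ↥(EC Y Z) → Y → Set Y)
    (ℋ : Set ↥(EC Y Z)) (U : Set (Z × Z)) : Set ↥(OZ sel) :=
  {o | ∃ f ∈ ℋ, ∃ y : Y, o.1 = sel U f y}

/-- The dual topology `𝔗(𝕋)` on `EC(Y,Z)` of a topology `𝕋` on `𝒪_Z(Y)`:
generated by the subbasis `{(ℍ,U) | ℍ ∈ 𝕋, U ∈ 𝒰}`. -/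
def dualTopEC (sel : Set (Z × Z) → ↥(EC Y Z) → Y → Set Y)
    (TO : TopologicalSpace ↥(OZ sel)) : TopologicalSpace ↥(EC Y Z) :=
  TopologicalSpace.generateFrom
    {S | ∃ (ℍ : Set ↥(OZ sel)) (U : Set (Z × Z)),
      (letI := TO; IsOpen ℍ) ∧ U ∈ uniformity Z ∧ S = ECSet sel ℍ U}

/-- The dual topology `𝕋(𝔗)` on `𝒪_Z(Y)` of a topology `𝔗` on `EC(Y,Z)`:
generated by the subbasis `{(ℋ,U) | ℋ ∈ 𝔗, U ∈ 𝒰}`. -/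
def dualTopOZ (sel : Set (Z × Z) → ↥(EC Y Z) → Y → Set Y)
    (T : TopologicalSpace ↥(EC Y Z)) : TopologicalSpace ↥(OZ sel) :=
  TopologicalSpace.generateFrom
    {S | ∃ (ℋ : Set ↥(EC Y Z)) (U : Set (Z × Z)),
      (letI := T; IsOpen ℋ) ∧ U ∈ uniformity Z ∧ S = OZSet sel ℋ U}

/-- The multifunction `ḡ : X × 𝒰 → 𝒪_Z(Y)` associated with `g* : X → EC(Y,Z)`:
`ḡ(x,U) = {U(g*(x),y) | y ∈ Y}`. -/
def gbar (sel : Set (Z × Z) → ↥(EC Y Z) → Y → Set Y) {X : Type u}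
    (g' : X → ↥(EC Y Z)) (U : Set (Z × Z)) (x : X) : Set ↥(OZ sel) :=
  {o | ∃ y : Y, o.1 = sel U (g' x) y}

/-- `ḡ` is *upper semicontinuous with respect to the first variable* (for the
topology `TO` on `𝒪_Z(Y)`): for each fixed entourage `U`, the multifunction
`x ↦ ḡ(x,U)` is upper semicontinuous. -/
def USCFirst (sel : Set (Z × Z) → ↥(EC Y Z) → Y → Set Y)
    (TO : TopologicalSpace ↥(OZ sel)) {X : Type u} [TopologicalSpace X]
    (g' : X → ↥(EC Y Z)) : Prop :=
  ∀ U ∈ uniformity Z, ∀ x : X, ∀ ℍ : Set ↥(OZ sel), (letI := TO; IsOpen ℍ) →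
    gbar sel g' U x ⊆ ℍ →
    ∃ V : Set X, IsOpen V ∧ x ∈ V ∧ ∀ x' ∈ V, gbar sel g' U x' ⊆ ℍ

/-- A topology `TO` on `𝒪_Z(Y)` is *splitting* if for every topological space `X`,
equi-continuity of `g : X × Y → Z` implies upper semicontinuity with respect to the
first variable of `ḡ`. -/
def SplittingO (sel : Set (Z × Z) → ↥(EC Y Z) → Y → Set Y)
    (TO : TopologicalSpace ↥(OZ sel)) : Prop :=
  ∀ (X : Type u) [TopologicalSpace X] (g' : X → ↥(EC Y Z)),
    EquiContinuous (fun p : X × Y => (g' p.1).1 p.2) → USCFirst sel TO g'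

/-- A topology `TO` on `𝒪_Z(Y)` is *admissible* if for every topological space `X`
and every map `g* : X → EC(Y,Z)`, upper semicontinuity with respect to the first
variable of `ḡ` implies equi-continuity of `g`. -/
def AdmissibleO (sel : Set (Z × Z) → ↥(EC Y Z) → Y → Set Y)
    (TO : TopologicalSpace ↥(OZ sel)) : Prop :=
  ∀ (X : Type u) [TopologicalSpace X] (g' : X → ↥(EC Y Z)),
    USCFirst sel TO g' → EquiContinuous (fun p : X × Y => (g' p.1).1 p.2)

end Dual

/-- a topology `𝕋` on `𝒪_Z(Y)` is splitting iff its dual topology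
`𝔗(𝕋)` on `EC(Y,Z)` is splitting. -/
theorem splittingO_iff_dual_splitting {Y Z : Type u} [TopologicalSpace Y]
    [UniformSpace Z] (sel : Set (Z × Z) → ↥(EC Y Z) → Y → Set Y)
    (hsel : IsSelection sel) (TO : TopologicalSpace ↥(OZ sel)) :
    SplittingO sel TO ↔ Splitting (dualTopEC sel TO) := by
  have key : ∀ (X : Type u) (g' : X → ↥(EC Y Z)) (U : Set (Z × Z)), U ∈ uniformity Z →
      ∀ (x : X) (ℍ : Set ↥(OZ sel)),
      (gbar sel g' U x ⊆ ℍ ↔ g' x ∈ ECSet sel ℍ U) := by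
    intro X g' U hU x ℍ
    constructor
    · intro h y
      have hmem : sel U (g' x) y ∈ OZ sel := ⟨U, hU, g' x, y, rfl⟩
      exact ⟨⟨_, hmem⟩, h ⟨y, rfl⟩, rfl⟩
    · rintro h o ⟨y, hy⟩
      obtain ⟨o', ho', hval⟩ := h y
      have : o' = o := Subtype.ext (hval.trans hy.symm)
      exact this ▸ ho'
  constructor
  · intro hs X _ g' hg
    have husc := hs X g' hg
    show @Continuous X _ _ (dualTopEC sel TO) g'
    rw [dualTopEC, continuous_generateFrom_iff]
    rintro S ⟨ℍ, U, hℍ, hU, rfl⟩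
    rw [isOpen_iff_forall_mem_open]
    intro x hx
    obtain ⟨V, hVopen, hxV, hV⟩ := husc U hU x ℍ hℍ ((key X g' U hU x ℍ).mpr hx)
    exact ⟨V, fun x' hx' => (key X g' U hU x' ℍ).mp (hV x' hx'), hVopen, hxV⟩
  · intro hs X _ g' hg U hU x ℍ hℍ hsub
    have hcont := hs X g' hg
    have hopen : (dualTopEC sel TO).IsOpen (ECSet sel ℍ U) :=
      TopologicalSpace.GenerateOpen.basic _ ⟨ℍ, U, hℍ, hU, rfl⟩
    refine ⟨g' ⁻¹' ECSet sel ℍ U, @Continuous.isOpen_preimage X _ _ (dualTopEC sel TO) g' hcont _ hopen,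
      (key X g' U hU x ℍ).mp hsub, fun x' hx' => (key X g' U hU x' ℍ).mpr hx'⟩
end

section
/- Let (Y, τ) be a topological space, (Z, 𝒰) a uniform space, and fix a selection U(f,y) of open witnesses of equi-continuity. A topology 𝕋 on 𝒪_Z(Y) is admissible if and only if its dual topology 𝔗(𝕋) on EC(Y,Z) (generated by the subbasis {(ℍ,U) : ℍ ∈ 𝕋, U ∈ 𝒰}) is admissible. -/
universe u

lemma gbar_subset_iff {Y Z : Type u} [TopologicalSpace Y] [UniformSpace Z]
    (sel : Set (Z × Z) → ↥(EC Y Z) → Y → Set Y) {X : Type u}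
    (g' : X → ↥(EC Y Z)) {U : Set (Z × Z)} (hU : U ∈ uniformity Z)
    (ℍ : Set ↥(OZ sel)) (x : X) :
    gbar sel g' U x ⊆ ℍ ↔ g' x ∈ ECSet sel ℍ U := by
  constructor
  · intro h y
    have hmem : sel U (g' x) y ∈ OZ sel := ⟨U, hU, g' x, y, rfl⟩
    exact ⟨⟨sel U (g' x) y, hmem⟩, h ⟨y, rfl⟩, rfl⟩
  · intro h o ho
    obtain ⟨y, hy⟩ := ho
    obtain ⟨o', ho', hval⟩ := h y
    have : o = o' := Subtype.ext (hy.trans hval.symm)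
    exact this ▸ ho'

/-- a topology `𝕋` on `𝒪_Z(Y)` is admissible iff its dual topology
`𝔗(𝕋)` on `EC(Y,Z)` is admissible. -/
theorem admissibleO_iff_dual_admissible {Y Z : Type u} [TopologicalSpace Y]
    [UniformSpace Z] (sel : Set (Z × Z) → ↥(EC Y Z) → Y → Set Y)
    (hsel : IsSelection sel) (TO : TopologicalSpace ↥(OZ sel)) :
    AdmissibleO sel TO ↔ Admissible (dualTopEC sel TO) := by
  constructor
  · intro hA
    letI T := dualTopEC sel TO
    have husc : USCFirst sel TO (id : ↥(EC Y Z) → ↥(EC Y Z)) := by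
      intro U hU x ℍ hℍ hsub
      refine ⟨ECSet sel ℍ U, ?_, ?_, ?_⟩
      · exact TopologicalSpace.isOpen_generateFrom_of_mem ⟨ℍ, U, hℍ, hU, rfl⟩
      · exact (gbar_subset_iff sel id hU ℍ x).mp hsub
      · intro x' hx'
        exact (gbar_subset_iff sel id hU ℍ x').mpr hx'
    exact hA _ id husc
  · intro hAd X _ g' husc
    letI T := dualTopEC sel TO
    have hcont : Continuous g' := by
      apply continuous_generateFrom_iff.mpr
      rintro S ⟨ℍ, U, hℍ, hU, rfl⟩
      rw [isOpen_iff_forall_mem_open]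
      intro x hx
      obtain ⟨V, hVopen, hxV, hV⟩ :=
        husc U hU x ℍ hℍ ((gbar_subset_iff sel g' hU ℍ x).mpr hx)
      exact ⟨V, fun x' hx' => (gbar_subset_iff sel g' hU ℍ x').mp (hV x' hx'),
        hVopen, hxV⟩
    intro p U hU
    obtain ⟨W, hWopen, hpW, hW⟩ := hAd (g' p.1, p.2) U hU
    refine ⟨(fun q : X × Y => (g' q.1, q.2)) ⁻¹' W, ?_, hpW, fun q hq => hW _ hq⟩
    exact hWopen.preimage ((hcont.comp continuous_fst).prodMk continuous_snd)
end
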